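/- Under the assumptions r^2 ≤ ε^3 σ^2, l ≥ 2/ε^4, and P(t_j = 0) ≤ 2r^2/(ε σ^2) for i.i.d. {0,1}-valued t_1,...,t_l, one has Σ_i σ^2 u_i^2 · E[(1 − (Σ_j t_j)/l)^2] ≤ 5 ε r^2. -/

import Mathlib

open MeasureTheory ProbabilityTheory

set_option maxHeartbeats 1000000 in
/-- Under `r^2 ≤ ε^3 σ^2`, `l ≥ 2/ε^4` and `P(t_j = 0) ≤ 2r^2/(ε σ^2)` for
i.i.d. `{0,1}`-valued `t_j`, one has
`∑ i, σ^2 u_i^2 · E[(1 − (∑_j t_j)/l)^2] ≤ 5 ε r^2`. -/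
theorem stmt8 {Ω : Type*} [MeasurableSpace Ω] (μ : Measure Ω) [IsProbabilityMeasure μ]
    (n l : ℕ) (ε σ r : ℝ) (u : Fin n → ℝ)
    (hε0 : 0 < ε) (hε1 : ε < 1) (hσ : 0 < σ) (hr : 0 ≤ r)
    (hu : ∑ i, u i ^ 2 = 1)
    (hR : r ^ 2 ≤ ε ^ 3 * σ ^ 2)
    (hl : 0 < l) (hl2 : 2 / ε ^ 4 ≤ (l : ℝ))
    (t : Fin l → Ω → ℝ)
    (h01 : ∀ j ω, t j ω = 0 ∨ t j ω = 1)
    (hmeas : ∀ j, Measurable (t j))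
    (hindep : iIndepFun t μ)
    (hid : ∀ j k, IdentDistrib (t j) (t k) μ μ)
    (hq : ∀ j, (μ {ω | t j ω = 0}).toReal ≤ 2 * r ^ 2 / (ε * σ ^ 2)) :
    ∑ i, σ ^ 2 * u i ^ 2 * ∫ ω, (1 - (∑ j, t j ω) / l) ^ 2 ∂μ
      ≤ 5 * ε * r ^ 2 := by
  classical
  have hσ2 : (0:ℝ) < σ ^ 2 := by positivity
  have hl0 : (0:ℝ) < (l:ℝ) := by exact_mod_cast hl
  set Q : ℝ := 2 * r ^ 2 / (ε * σ ^ 2) with hQdef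
  have hQ0 : 0 ≤ Q := by positivity
  set s : Fin l → Ω → ℝ := fun j ω => 1 - t j ω with hs
  have hT : ∀ j, MeasurableSet {ω | t j ω = 0} := fun j =>
    hmeas j (measurableSet_singleton 0)
  set q : Fin l → ℝ := fun j => (μ {ω | t j ω = 0}).toReal with hqdef
  have hq0 : ∀ j, 0 ≤ q j := fun j => ENNReal.toReal_nonneg
  have hqQ : ∀ j, q j ≤ Q := hq
  have hs_ind : ∀ j, s j = Set.indicator {ω | t j ω = 0} (fun _ => (1:ℝ)) := by
    intro j; funext ω
    rcases h01 j ω with h | h <;> simp [hs, h, Set.indicator_apply]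
  have hsint : ∀ j, Integrable (s j) μ := by
    intro j; rw [hs_ind j]
    exact (integrable_const (1:ℝ)).indicator (hT j)
  have hsintegral : ∀ j, ∫ ω, s j ω ∂μ = q j := by
    intro j
    rw [hs_ind j]
    rw [integral_indicator_const (1:ℝ) (hT j)]
    simp [hqdef, measureReal_def]
  have hindep' : ∀ j k, j ≠ k → IndepFun (s j) (s k) μ := by
    intro j k hjk
    exact (hindep.indepFun hjk).comp (measurable_const.sub measurable_id)
      (measurable_const.sub measurable_id)
  have hss : ∀ j ω, s j ω * s j ω = s j ω := by
    intro j ω; rcases h01 j ω with h | h <;> simp [hs, h]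
  have hprod_int : ∀ j k, Integrable (fun ω => s j ω * s k ω) μ := by
    intro j k
    refine (integrable_const (1:ℝ)).mono' ?_ ?_
    · exact ((measurable_const.sub (hmeas j)).mul
        (measurable_const.sub (hmeas k))).aestronglyMeasurable
    · filter_upwards with ω
      rcases h01 j ω with h | h <;> rcases h01 k ω with h' | h' <;>
        simp [hs, h, h']
  have hIbound : ∀ j k, ∫ ω, s j ω * s k ω ∂μ
      ≤ q j * q k + (if j = k then q j else 0) := by
    intro j k
    by_cases hjk : j = k
    · subst hjk
      have h1 : (fun ω => s j ω * s j ω) = s j := by funext ω; exact hss j ω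
      have h2 : (if j = j then q j else 0) = q j := if_pos rfl
      rw [h1, h2, hsintegral j]
      nlinarith [hq0 j]
    · simp only [if_neg hjk, add_zero]
      have h := (hindep' j k hjk).integral_mul_eq_mul_integral (hsint j).aestronglyMeasurable (hsint k).aestronglyMeasurable
      rw [hsintegral j, hsintegral k] at h
      exact le_of_eq h
  -- rewrite the integrand
  have hrw : (fun ω => (1 - (∑ j, t j ω) / l) ^ 2)
      = fun ω => (∑ j, ∑ k, s j ω * s k ω) / (l:ℝ)^2 := by
    funext ω
    have h1 : (∑ j, s j ω) = (l:ℝ) - ∑ j, t j ω := by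
      simp [hs, Finset.sum_sub_distrib]
    have h2 : (∑ j, ∑ k, s j ω * s k ω) = (∑ j, s j ω) * (∑ k, s k ω) := by
      rw [Finset.sum_mul_sum]
    rw [h2, h1]
    field_simp
  have hE : ∫ ω, (1 - (∑ j, t j ω) / l) ^ 2 ∂μ
      = (∑ j, ∑ k, ∫ ω, s j ω * s k ω ∂μ) / (l:ℝ)^2 := by
    rw [hrw]
    rw [integral_div]
    congr 1
    rw [integral_finset_sum _ (fun j _ => integrable_finset_sum _ (fun k _ => hprod_int j k))]
    exact Finset.sum_congr rfl fun j _ =>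
      integral_finset_sum _ (fun k _ => hprod_int j k)
  -- bound the double sum
  have hsum : (∑ j, ∑ k, ∫ ω, s j ω * s k ω ∂μ) ≤ ((l:ℝ) * Q)^2 + (l:ℝ) * Q := by
    have h1 : (∑ j, ∑ k, ∫ ω, s j ω * s k ω ∂μ)
        ≤ ∑ j, ∑ k, (q j * q k + (if j = k then q j else 0)) := by
      refine Finset.sum_le_sum fun j _ => Finset.sum_le_sum fun k _ => hIbound j k
    have h2 : ∑ j : Fin l, ∑ k : Fin l, (q j * q k + (if j = k then q j else 0))
        = (∑ j, q j) * (∑ k, q k) + ∑ j, q j := by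
      rw [Finset.sum_mul_sum]
      rw [← Finset.sum_add_distrib]
      refine Finset.sum_congr rfl fun j _ => ?_
      rw [Finset.sum_add_distrib]
      congr 1
      simp
    have h3 : (∑ j, q j) ≤ (l:ℝ) * Q := by
      calc (∑ j, q j) ≤ ∑ _j : Fin l, Q := Finset.sum_le_sum fun j _ => hqQ j
        _ = (l:ℝ) * Q := by simp [mul_comm]
    have h4 : 0 ≤ ∑ j, q j := Finset.sum_nonneg fun j _ => hq0 j
    calc (∑ j, ∑ k, ∫ ω, s j ω * s k ω ∂μ)
        ≤ (∑ j, q j) * (∑ k, q k) + ∑ j, q j := h1.trans (le_of_eq h2)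
      _ ≤ ((l:ℝ) * Q) * ((l:ℝ) * Q) + (l:ℝ) * Q := by
          gcongr
      _ = ((l:ℝ) * Q)^2 + (l:ℝ) * Q := by ring
  -- collapse the outer sum
  have hlhs : ∑ i, σ ^ 2 * u i ^ 2 * ∫ ω, (1 - (∑ j, t j ω) / l) ^ 2 ∂μ
      = σ ^ 2 * ∫ ω, (1 - (∑ j, t j ω) / l) ^ 2 ∂μ := by
    set E := ∫ ω, (1 - (∑ j, t j ω) / l) ^ 2 ∂μ
    have : ∀ i, σ ^ 2 * u i ^ 2 * E = (σ ^ 2 * E) * u i ^ 2 := fun i => by ring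
    simp_rw [this, ← Finset.mul_sum, hu, mul_one]
  rw [hlhs, hE]
  have hEb : (∑ j, ∑ k, ∫ ω, s j ω * s k ω ∂μ) / (l:ℝ)^2
      ≤ Q^2 + Q / l := by
    rw [div_le_iff₀ (by positivity)]
    calc (∑ j, ∑ k, ∫ ω, s j ω * s k ω ∂μ) ≤ ((l:ℝ) * Q)^2 + (l:ℝ) * Q := hsum
      _ = (Q^2 + Q / l) * (l:ℝ)^2 := by field_simp
  have final : σ ^ 2 * (Q^2 + Q / l) ≤ 5 * ε * r ^ 2 := by
    have hQε : Q ≤ 2 * ε ^ 2 := by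
      rw [hQdef, div_le_iff₀ (by positivity)]
      nlinarith
    have hQσ : σ ^ 2 * Q = 2 * r ^ 2 / ε := by
      rw [hQdef]; field_simp
    have hinvl : 1 / (l:ℝ) ≤ ε ^ 4 / 2 := by
      rw [div_le_div_iff₀ hl0 (by norm_num)]
      have h2 : 2 ≤ (l:ℝ) * ε ^ 4 := (div_le_iff₀ (by positivity)).mp hl2
      nlinarith [h2]
    have h5 : σ ^ 2 * Q ^ 2 ≤ 4 * ε * r ^ 2 := by
      have : σ ^ 2 * Q ^ 2 = (σ ^ 2 * Q) * Q := by ring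
      rw [this, hQσ]
      calc 2 * r ^ 2 / ε * Q ≤ 2 * r ^ 2 / ε * (2 * ε ^ 2) := by
            apply mul_le_mul_of_nonneg_left hQε (by positivity)
        _ = 4 * ε * r ^ 2 := by field_simp; ring
    have h6 : σ ^ 2 * (Q / l) ≤ ε * r ^ 2 := by
      have : σ ^ 2 * (Q / l) = (σ ^ 2 * Q) * (1 / l) := by ring
      rw [this, hQσ]
      calc 2 * r ^ 2 / ε * (1 / (l:ℝ)) ≤ 2 * r ^ 2 / ε * (ε ^ 4 / 2) := by
            apply mul_le_mul_of_nonneg_left hinvl (by positivity)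
        _ = ε ^ 3 * r ^ 2 := by field_simp
        _ ≤ ε * r ^ 2 := by
            have h7 : ε ^ 3 ≤ ε := by nlinarith [sq_nonneg ε]
            nlinarith [sq_nonneg r, h7]
    have hexp : σ ^ 2 * (Q ^ 2 + Q / l) = σ ^ 2 * Q ^ 2 + σ ^ 2 * (Q / l) := by ring
    rw [hexp]
    linarith
  calc σ ^ 2 * ((∑ j, ∑ k, ∫ ω, s j ω * s k ω ∂μ) / (l:ℝ)^2)
      ≤ σ ^ 2 * (Q^2 + Q / l) := by
        apply mul_le_mul_of_nonneg_left hEb (le_of_lt hσ2)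
    _ ≤ 5 * ε * r ^ 2 := final
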